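/- Let P be an r×d real matrix with λ I_d + Pᵀ P H invertible, H a symmetric positive semidefinite d×d matrix with rank(H) < d, and λ > 0. Define ΔH = (λ I_d + H)⁻¹ - Pᵀ (λ I_r + P H Pᵀ)⁻¹ P. Then ‖ΔH‖₂ ≤ 1/λ + σ_max(PᵀP)/λ + σ_max(PᵀP)² σ_max(H)/λ², where ‖·‖₂ denotes the operator norm and σ_max the largest singular value. -/

import Mathlib

open Matrix

/-- The operator (spectral) norm of a matrix, i.e. its largest singular value. -/
noncomputable def opNorm {m n : ℕ} (A : Matrix (Fin m) (Fin n) ℝ) : ℝ :=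
  ‖LinearMap.toContinuousLinearMap (Matrix.toEuclideanLin A)‖

open scoped Matrix.Norms.L2Operator

lemma opNorm_eq_l2 {m n : ℕ} (A : Matrix (Fin m) (Fin n) ℝ) : opNorm A = ‖A‖ := rfl

lemma inv_opNorm_le {k : ℕ} (S : Matrix (Fin k) (Fin k) ℝ) (hS : S.PosSemidef)
    (lam : ℝ) (hlam : 0 < lam) :
    ‖(lam • (1 : Matrix (Fin k) (Fin k) ℝ) + S)⁻¹‖ ≤ 1 / lam := by
  set M := lam • (1 : Matrix (Fin k) (Fin k) ℝ) + S with hMdef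
  have hMd : (lam • (1 : Matrix (Fin k) (Fin k) ℝ)).PosDef := by
    rw [Matrix.smul_one_eq_diagonal]
    exact Matrix.posDef_diagonal_iff.mpr fun _ => hlam
  have hM : M.PosDef := hMd.add_posSemidef hS
  have hMul : M * M⁻¹ = 1 :=
    Matrix.mul_nonsing_inv _ ((Matrix.isUnit_iff_isUnit_det _).mp hM.isUnit)
  rw [Matrix.l2_opNorm_def]
  apply ContinuousLinearMap.opNorm_le_bound _ (by positivity)
  intro x
  set y : EuclideanSpace ℝ (Fin k) := Matrix.toEuclideanLin M⁻¹ x with hy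
  have h1 : Matrix.toEuclideanLin M y = x := by
    simp [hy, Matrix.toEuclideanLin_apply, Matrix.mulVec_mulVec, hMul]
  have h2 : inner ℝ y x = star (WithLp.equiv 2 _ y) ⬝ᵥ (M *ᵥ WithLp.equiv 2 _ y) := by
    rw [← h1, EuclideanSpace.inner_eq_star_dotProduct, dotProduct_comm]; rfl
  have h4 : (0:ℝ) ≤ star (WithLp.equiv 2 _ y) ⬝ᵥ (S *ᵥ WithLp.equiv 2 _ y) := hS.dotProduct_mulVec_nonneg _
  have h5 : star (WithLp.equiv 2 _ y) ⬝ᵥ (WithLp.equiv 2 _ y) = ‖y‖^2 := by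
    rw [← real_inner_self_eq_norm_sq]; rfl
  have h3 : lam * ‖y‖^2 ≤ inner ℝ y x := by
    rw [h2, hMdef]
    simp only [Matrix.add_mulVec, Matrix.smul_mulVec, Matrix.one_mulVec,
      dotProduct_add, dotProduct_smul, smul_eq_mul, h5]
    linarith
  have h6 : (inner ℝ y x : ℝ) ≤ ‖y‖ * ‖x‖ := real_inner_le_norm y x
  show ‖y‖ ≤ 1 / lam * ‖x‖
  rcases (norm_nonneg y).eq_or_lt with h | h
  · rw [← h]; positivity
  · have : lam * ‖y‖ ≤ ‖x‖ := by
      have := h3.trans h6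
      nlinarith
    rw [div_mul_eq_mul_div, one_mul, le_div_iff₀ hlam]
    linarith [this]

/-- Intermediate bound in the Gaussian compression error bound (Theorem 1). -/
theorem gaussian_compression_error_bound {r d : ℕ}
    (P : Matrix (Fin r) (Fin d) ℝ)
    (H : Matrix (Fin d) (Fin d) ℝ) (hH : H.PosSemidef) (hrank : H.rank < d)
    (lam : ℝ) (hlam : 0 < lam)
    (hInv : IsUnit (lam • (1 : Matrix (Fin d) (Fin d) ℝ) + Pᵀ * P * H)) :
    opNorm ((lam • (1 : Matrix (Fin d) (Fin d) ℝ) + H)⁻¹ -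
        Pᵀ * (lam • (1 : Matrix (Fin r) (Fin r) ℝ) + P * H * Pᵀ)⁻¹ * P) ≤
      1 / lam + opNorm (Pᵀ * P) / lam +
        opNorm (Pᵀ * P) ^ 2 * opNorm H / lam ^ 2 := by
  simp only [opNorm_eq_l2]
  set S := P * H * Pᵀ with hS
  set M := lam • (1 : Matrix (Fin r) (Fin r) ℝ) + S with hMdef
  have hSps : S.PosSemidef := by
    have := hH.mul_mul_conjTranspose_same P
    rwa [Matrix.conjTranspose_eq_transpose_of_trivial] at this
  have hMd : (lam • (1 : Matrix (Fin r) (Fin r) ℝ)).PosDef := by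
    rw [Matrix.smul_one_eq_diagonal]
    exact Matrix.posDef_diagonal_iff.mpr fun _ => hlam
  have hM : M.PosDef := hMd.add_posSemidef hSps
  have hMul : M⁻¹ * M = 1 :=
    Matrix.nonsing_inv_mul _ ((Matrix.isUnit_iff_isUnit_det _).mp hM.isUnit)
  have key : M⁻¹ = lam⁻¹ • (1 - M⁻¹ * S) := by
    have : M⁻¹ * (M - S) = lam • M⁻¹ := by
      rw [hMdef]; simp [Matrix.mul_smul, Matrix.mul_one]
    rw [Matrix.mul_sub, hMul] at this
    rw [this, smul_smul, inv_mul_cancel₀ hlam.ne', one_smul]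
  have key2 : Pᵀ * M⁻¹ * P =
      lam⁻¹ • (Pᵀ * P) - lam⁻¹ • ((Pᵀ * M⁻¹ * P) * H * (Pᵀ * P)) := by
    calc Pᵀ * M⁻¹ * P = Pᵀ * (lam⁻¹ • (1 - M⁻¹ * S)) * P := by rw [← key]
    _ = lam⁻¹ • (Pᵀ * P) - lam⁻¹ • ((Pᵀ * M⁻¹ * P) * H * (Pᵀ * P)) := by
        rw [hS]
        simp only [Matrix.mul_smul, Matrix.smul_mul, Matrix.mul_sub, Matrix.sub_mul,
          Matrix.mul_one, Matrix.one_mul, smul_sub, Matrix.mul_assoc]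
  set A := lam • (1 : Matrix (Fin d) (Fin d) ℝ) + H with hA
  -- Norm bounds
  have hPT : ‖Pᵀ‖ = ‖P‖ := by
    rw [← Matrix.conjTranspose_eq_transpose_of_trivial, Matrix.l2_opNorm_conjTranspose]
  have hPTP : ‖Pᵀ * P‖ = ‖P‖ * ‖P‖ := by
    rw [← Matrix.conjTranspose_eq_transpose_of_trivial,
      Matrix.l2_opNorm_conjTranspose_mul_self]
  have hMinv : ‖M⁻¹‖ ≤ 1 / lam := inv_opNorm_le S hSps lam hlam
  have hAinv : ‖A⁻¹‖ ≤ 1 / lam := inv_opNorm_le H hH lam hlam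
  have hT : ‖Pᵀ * M⁻¹ * P‖ ≤ ‖Pᵀ * P‖ / lam := by
    calc ‖Pᵀ * M⁻¹ * P‖ ≤ ‖Pᵀ * M⁻¹‖ * ‖P‖ := Matrix.l2_opNorm_mul _ _
    _ ≤ ‖Pᵀ‖ * ‖M⁻¹‖ * ‖P‖ := by
        have := Matrix.l2_opNorm_mul Pᵀ M⁻¹
        exact mul_le_mul_of_nonneg_right this (norm_nonneg _)
    _ ≤ ‖P‖ * (1 / lam) * ‖P‖ := by
        rw [hPT]
        have h1 : ‖P‖ * ‖M⁻¹‖ ≤ ‖P‖ * (1 / lam) :=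
          mul_le_mul_of_nonneg_left hMinv (norm_nonneg _)
        exact mul_le_mul_of_nonneg_right h1 (norm_nonneg _)
    _ = ‖Pᵀ * P‖ / lam := by rw [hPTP]; ring
  have hProd : ‖(Pᵀ * M⁻¹ * P) * H * (Pᵀ * P)‖ ≤
      (‖Pᵀ * P‖ / lam) * ‖H‖ * ‖Pᵀ * P‖ := by
    calc ‖(Pᵀ * M⁻¹ * P) * H * (Pᵀ * P)‖
        ≤ ‖(Pᵀ * M⁻¹ * P) * H‖ * ‖Pᵀ * P‖ := Matrix.l2_opNorm_mul _ _
    _ ≤ ‖Pᵀ * M⁻¹ * P‖ * ‖H‖ * ‖Pᵀ * P‖ :=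
        mul_le_mul_of_nonneg_right (Matrix.l2_opNorm_mul _ _) (norm_nonneg _)
    _ ≤ (‖Pᵀ * P‖ / lam) * ‖H‖ * ‖Pᵀ * P‖ := by
        have h1 : ‖Pᵀ * M⁻¹ * P‖ * ‖H‖ ≤ (‖Pᵀ * P‖ / lam) * ‖H‖ :=
          mul_le_mul_of_nonneg_right hT (norm_nonneg _)
        exact mul_le_mul_of_nonneg_right h1 (norm_nonneg _)
  -- Assemble
  have split : A⁻¹ - Pᵀ * M⁻¹ * P =
      (A⁻¹ - lam⁻¹ • (Pᵀ * P)) + lam⁻¹ • ((Pᵀ * M⁻¹ * P) * H * (Pᵀ * P)) := by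
    conv_lhs => rw [key2]
    rw [sub_sub_eq_add_sub, sub_add_eq_add_sub]
  rw [split]
  have hlaminv : (0:ℝ) ≤ lam⁻¹ := le_of_lt (inv_pos.mpr hlam)
  calc ‖(A⁻¹ - lam⁻¹ • (Pᵀ * P)) + lam⁻¹ • ((Pᵀ * M⁻¹ * P) * H * (Pᵀ * P))‖
      ≤ ‖A⁻¹ - lam⁻¹ • (Pᵀ * P)‖ + ‖lam⁻¹ • ((Pᵀ * M⁻¹ * P) * H * (Pᵀ * P))‖ :=
        norm_add_le _ _
  _ ≤ (‖A⁻¹‖ + ‖lam⁻¹ • (Pᵀ * P)‖) + ‖lam⁻¹ • ((Pᵀ * M⁻¹ * P) * H * (Pᵀ * P))‖ := by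
        have := norm_sub_le A⁻¹ (lam⁻¹ • (Pᵀ * P))
        linarith
  _ = ‖A⁻¹‖ + lam⁻¹ * ‖Pᵀ * P‖ + lam⁻¹ * ‖(Pᵀ * M⁻¹ * P) * H * (Pᵀ * P)‖ := by
        rw [norm_smul, norm_smul, Real.norm_eq_abs, abs_of_nonneg hlaminv]
  _ ≤ 1 / lam + lam⁻¹ * ‖Pᵀ * P‖ + lam⁻¹ * ((‖Pᵀ * P‖ / lam) * ‖H‖ * ‖Pᵀ * P‖) := by
        have h1 := mul_le_mul_of_nonneg_left hProd hlaminv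
        linarith
  _ = 1 / lam + ‖Pᵀ * P‖ / lam + ‖Pᵀ * P‖ ^ 2 * ‖H‖ / lam ^ 2 := by
        field_simp
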